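/- Let p ≥ 1 and let f be the map on p×p real matrices defined by f(A) = d(A) · A · d(A), where d(A) is the diagonal matrix with entries d(A)_{ii} = (A_{ii})^{-1/2}. Let A₀ be a p×p real matrix with A₀_{ii} > 0 for all i, let D₀ be the diagonal matrix with entries A₀_{ii}, let Ψ = f(A₀), and for a matrix H let dg(H) denote the diagonal matrix with entries H_{ii}. Then f is Fréchet differentiable at A₀ with derivative H ↦ d(A₀) · H · d(A₀) − (1/2)(dg(H) · D₀⁻¹ · Ψ + Ψ · D₀⁻¹ · dg(H)). -/

import Mathlib

open Matrix

attribute [local instance] Matrix.normedAddCommGroup Matrix.normedSpace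

/-- `d(A)`: the diagonal matrix with entries `(A_{ii})^{-1/2}`. -/
noncomputable def dmat {p : ℕ} (A : Matrix (Fin p) (Fin p) ℝ) : Matrix (Fin p) (Fin p) ℝ :=
  Matrix.diagonal fun i => (Real.sqrt (A i i))⁻¹

/-- The normalization map `f(A) = d(A) · A · d(A)`. -/
noncomputable def normalizeMat {p : ℕ} (A : Matrix (Fin p) (Fin p) ℝ) :
    Matrix (Fin p) (Fin p) ℝ :=
  dmat A * A * dmat A

/-- evaluation of a matrix entry as a continuous linear map -/
noncomputable def evalCLM {p : ℕ} (i j : Fin p) :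
    Matrix (Fin p) (Fin p) ℝ →L[ℝ] ℝ :=
  LinearMap.toContinuousLinearMap
    { toFun := fun H => H i j
      map_add' := fun _ _ => rfl
      map_smul' := fun _ _ => rfl }

@[simp] lemma evalCLM_apply {p : ℕ} (i j : Fin p) (H : Matrix (Fin p) (Fin p) ℝ) :
    evalCLM i j H = H i j := rfl

lemma hasDerivAt_invSqrt {x : ℝ} (hx : 0 < x) :
    HasDerivAt (fun y => (Real.sqrt y)⁻¹) (-(1/2) * x⁻¹ * (Real.sqrt x)⁻¹) x := by
  have hs : Real.sqrt x ≠ 0 := by positivity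
  have h := (Real.hasDerivAt_sqrt hx.ne').inv hs
  rw [Real.sq_sqrt hx.le] at h
  exact h.congr_deriv (by ring)

lemma normalizeMat_eq_sum {p : ℕ} (A : Matrix (Fin p) (Fin p) ℝ) :
    normalizeMat A = ∑ i, ∑ j,
      ((Real.sqrt (A i i))⁻¹ * A i j * (Real.sqrt (A j j))⁻¹) •
        Matrix.single i j (1 : ℝ) := by
  ext a b
  simp [normalizeMat, dmat, Matrix.sum_apply, Matrix.single, ite_and, Matrix.mul_apply,
    Matrix.diagonal]

theorem hasFDerivAt_normalizeMat
    {p : ℕ} (hp : 1 ≤ p) (A₀ : Matrix (Fin p) (Fin p) ℝ)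
    (hpos : ∀ i, 0 < A₀ i i)
    (D₀ : Matrix (Fin p) (Fin p) ℝ) (hD₀ : D₀ = Matrix.diagonal fun i => A₀ i i)
    (Ψ : Matrix (Fin p) (Fin p) ℝ) (hΨ : Ψ = normalizeMat A₀) :
    ∃ L : Matrix (Fin p) (Fin p) ℝ →L[ℝ] Matrix (Fin p) (Fin p) ℝ,
      (∀ H : Matrix (Fin p) (Fin p) ℝ,
        L H = dmat A₀ * H * dmat A₀
          - (1 / 2 : ℝ) • ((Matrix.diagonal fun i => H i i) * D₀⁻¹ * Ψ
              + Ψ * D₀⁻¹ * (Matrix.diagonal fun i => H i i)))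
      ∧ HasFDerivAt normalizeMat L A₀ := by
  classical
  -- derivative of each scalar factor
  have hD : ∀ i : Fin p, HasFDerivAt (fun A : Matrix (Fin p) (Fin p) ℝ => (Real.sqrt (A i i))⁻¹)
      ((-(1/2) * (A₀ i i)⁻¹ * (Real.sqrt (A₀ i i))⁻¹) • evalCLM i i) A₀ := fun i =>
    by
      have := (hasDerivAt_invSqrt (hpos i)).comp_hasFDerivAt A₀ ((evalCLM i i).hasFDerivAt (x := A₀))
      exact this
  -- derivative of each component
  set c : Fin p → Fin p → (Matrix (Fin p) (Fin p) ℝ →L[ℝ] ℝ) := fun i j =>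
    ((Real.sqrt (A₀ i i))⁻¹ * A₀ i j) •
        ((-(1/2) * (A₀ j j)⁻¹ * (Real.sqrt (A₀ j j))⁻¹) • evalCLM j j)
      + (Real.sqrt (A₀ j j))⁻¹ •
        ((Real.sqrt (A₀ i i))⁻¹ • evalCLM i j
          + A₀ i j • ((-(1/2) * (A₀ i i)⁻¹ * (Real.sqrt (A₀ i i))⁻¹) • evalCLM i i)) with hc
  have hcomp : ∀ i j : Fin p,
      HasFDerivAt (fun A : Matrix (Fin p) (Fin p) ℝ =>
        (Real.sqrt (A i i))⁻¹ * A i j * (Real.sqrt (A j j))⁻¹) (c i j) A₀ :=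
    fun i j => ((hD i).mul (evalCLM i j).hasFDerivAt).mul (hD j)
  set L : Matrix (Fin p) (Fin p) ℝ →L[ℝ] Matrix (Fin p) (Fin p) ℝ :=
    ∑ i, ∑ j, (c i j).smulRight (Matrix.single i j (1 : ℝ)) with hL
  have hder : HasFDerivAt normalizeMat L A₀ := by
    rw [show (normalizeMat : Matrix (Fin p) (Fin p) ℝ → _) = fun A => ∑ i, ∑ j,
        ((Real.sqrt (A i i))⁻¹ * A i j * (Real.sqrt (A j j))⁻¹) •
          Matrix.single i j (1 : ℝ) from funext normalizeMat_eq_sum, hL]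
    exact HasFDerivAt.fun_sum fun i _ => HasFDerivAt.fun_sum fun j _ =>
      (hcomp i j).smul_const (Matrix.single i j (1 : ℝ))
  refine ⟨L, fun H => ?_, hder⟩
  have hDinv : D₀⁻¹ = Matrix.diagonal fun i => (A₀ i i)⁻¹ := by
    rw [hD₀]
    apply Matrix.inv_eq_right_inv
    rw [Matrix.diagonal_mul_diagonal]
    have : (fun i => A₀ i i * (A₀ i i)⁻¹) = fun _ => (1 : ℝ) :=
      funext fun i => mul_inv_cancel₀ (hpos i).ne'
    rw [this, Matrix.diagonal_one]
  ext a b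
  have hΨab : ∀ a b : Fin p, Ψ a b =
      (Real.sqrt (A₀ a a))⁻¹ * A₀ a b * (Real.sqrt (A₀ b b))⁻¹ := by
    intro a b
    rw [hΨ]
    simp [normalizeMat, dmat, Matrix.diagonal_mul, Matrix.mul_diagonal]
  have hLH : L H a b = c a b H := by
    simp [hL, ContinuousLinearMap.sum_apply, Matrix.sum_apply,
      ContinuousLinearMap.smulRight_apply, Matrix.smul_apply, Matrix.single,
      ite_and, smul_eq_mul, mul_ite, mul_one, mul_zero]
  rw [hLH, hDinv]
  simp only [hc, ContinuousLinearMap.add_apply, ContinuousLinearMap.smul_apply,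
    evalCLM_apply, smul_eq_mul, Matrix.sub_apply, Matrix.smul_apply, Matrix.add_apply,
    Matrix.mul_diagonal, Matrix.diagonal_mul, Matrix.diagonal_mul_diagonal, dmat,
    Matrix.diagonal_apply_eq, hΨab]
  ring
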